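/- If X_{i,0} = 0 then for every s ∈ ℕ, the queue length admits the representation X_{i,s} = Σ_{t=1}^∞ 1{A_t = i, t ≤ s < t + D_{i,t}}, i.e., the number of tasks at client i at time s equals the number of tasks sent to i that have arrived by time s but not yet departed. -/
import Mathlib


open Finset

/-- Queue-length representation: if `X_{i,0} = 0`, then for every `s`,
`X_{i,s} = Σ_{t=1}^∞ 1{A_t = i, t ≤ s < t + D_{i,t}}`, the number of tasks routed to
client `i` that have arrived by round `s` but not yet departed. -/
theorem queue_length_representation (n : ℕ) (i : Fin n)
    (A C : ℕ → Fin n) (X D : ℕ → ℕ)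
    (hX0 : X 0 = 0)
    (hXrec : ∀ t, 1 ≤ t →
      (X t : ℤ) = X (t - 1) + (if A t = i then 1 else 0) - (if C t = i then 1 else 0))
    (hD0 : ∀ t, A t ≠ i → D t = 0)
    (hD : ∀ t, 1 ≤ t → A t = i →
      IsLeast {r : ℕ |
        (∑ s ∈ Finset.Icc t (t + r), (if C s = i then 1 else 0)) = X (t - 1) + 1} (D t))
    (hmono : StrictMonoOn (fun t => t + D t) {t | 1 ≤ t ∧ A t = i})
    (hbij : Set.BijOn (fun t => t + D t) {t | 1 ≤ t ∧ A t = i} {t | 1 ≤ t ∧ C t = i}) :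
    ∀ s, X s = ∑ t ∈ Finset.Icc 1 s, (if A t = i ∧ s < t + D t then 1 else 0) := by
  intro s
  -- Step 1: explicit formula for X s in ℤ
  have key : ∀ u, (X u : ℤ) = ∑ t ∈ Finset.Icc 1 u,
      ((if A t = i then (1:ℤ) else 0) - (if C t = i then 1 else 0)) := by
    intro u
    induction u with
    | zero => simp [hX0]
    | succ k ih =>
      rw [Finset.sum_Icc_succ_top (by omega : 1 ≤ k + 1), ← ih,
        hXrec (k+1) (by omega)]
      simp only [Nat.add_sub_cancel]
      ring
  -- Step 2: departures by time s equal arrivals with t + D t ≤ s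
  have hcount : ((Finset.Icc 1 s).filter (fun t => A t = i ∧ t + D t ≤ s)).card
      = ((Finset.Icc 1 s).filter (fun t => C t = i)).card := by
    apply Finset.card_bij (fun t _ => t + D t)
    · intro t ht
      simp only [Finset.mem_filter, Finset.mem_Icc] at ht ⊢
      have hm := hbij.mapsTo (show t ∈ {t | 1 ≤ t ∧ A t = i} from ⟨ht.1.1, ht.2.1⟩)
      exact ⟨⟨hm.1, ht.2.2⟩, hm.2⟩
    · intro a ha b hb h
      simp only [Finset.mem_filter, Finset.mem_Icc] at ha hb
      exact hbij.injOn ⟨ha.1.1, ha.2.1⟩ ⟨hb.1.1, hb.2.1⟩ h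
    · intro u hu
      simp only [Finset.mem_filter, Finset.mem_Icc] at hu
      obtain ⟨t, ht, htu⟩ := hbij.surjOn ⟨hu.1.1, hu.2⟩
      simp only [Set.mem_setOf_eq] at ht
      simp only at htu
      refine ⟨t, ?_, htu⟩
      simp only [Finset.mem_filter, Finset.mem_Icc]
      exact ⟨⟨ht.1, by omega⟩, ht.2, by omega⟩
  -- transfer to sums in ℤ
  have hcount' : (∑ t ∈ Finset.Icc 1 s, (if A t = i ∧ t + D t ≤ s then (1:ℤ) else 0))
      = ∑ t ∈ Finset.Icc 1 s, (if C t = i then (1:ℤ) else 0) := by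
    rw [Finset.sum_boole, Finset.sum_boole, hcount]

  -- split arrivals
  have hsplit : (∑ t ∈ Finset.Icc 1 s, (if A t = i then (1:ℤ) else 0))
      = (∑ t ∈ Finset.Icc 1 s, (if A t = i ∧ s < t + D t then (1:ℤ) else 0))
        + ∑ t ∈ Finset.Icc 1 s, (if A t = i ∧ t + D t ≤ s then (1:ℤ) else 0) := by
    rw [← Finset.sum_add_distrib]
    apply Finset.sum_congr rfl
    intro t _
    by_cases h1 : A t = i
    · by_cases h2 : t + D t ≤ s <;> simp [h1, h2] <;> omega
    · simp [h1]
  have hZ : (X s : ℤ) = ∑ t ∈ Finset.Icc 1 s,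
      (if A t = i ∧ s < t + D t then (1:ℤ) else 0) := by
    rw [key s, Finset.sum_sub_distrib, hsplit, ← hcount']
    ring
  have := hZ
  push_cast at this
  exact_mod_cast this
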